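/- arXiv:2203.08301 — 2 statements merged into one kernel-verified Lean document; each statement's English description precedes it below -/
import Mathlib

section
/- There exists a simple graph on a vertex type with exactly 50 elements that is strongly regular with parameters (50, 7, 0, 1), i.e. the Hoffman–Singleton graph exists. -/
set_option maxHeartbeats 4000000

def hsAdj (a b : Fin 50) : Bool :=
  let sa := a.val / 25; let ha := a.val % 25 / 5; let ja := a.val % 5
  let sb := b.val / 25; let hb := b.val % 25 / 5; let jb := b.val % 5
  if sa = 0 && sb = 0 then
    ha == hb && ((ja + 5 - jb) % 5 == 1 || (ja + 5 - jb) % 5 == 4)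
  else if sa = 1 && sb = 1 then
    ha == hb && ((ja + 5 - jb) % 5 == 2 || (ja + 5 - jb) % 5 == 3)
  else if sa = 0 then jb == (ha * hb + ja) % 5
  else ja == (hb * ha + jb) % 5

def HS : SimpleGraph (Fin 50) where
  Adj a b := hsAdj a b = true
  symm := by constructor; intro a b h; revert h; revert a b; decide
  loopless := by constructor; intro a; show ¬ _ = true; revert a; decide

instance : DecidableRel HS.Adj := fun _ _ => inferInstanceAs (Decidable (_ = true))

/-- The Hoffman–Singleton graph exists: there is a simple graph on a vertex type with
exactly 50 elements that is strongly regular with parameters (50, 7, 0, 1). -/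
theorem hoffmanSingleton_exists :
    ∃ (V : Type) (_ : Fintype V) (G : SimpleGraph V) (_ : DecidableRel G.Adj),
      G.IsSRGWith 50 7 0 1 := by
  refine ⟨Fin 50, inferInstance, HS, inferInstance, ?_, ?_, ?_, ?_⟩
  · decide
  · intro v; show HS.degree v = 7; revert v; decide
  · decide
  · exact fun v w hne => (by decide : ∀ v w : Fin 50, v ≠ w → ¬HS.Adj v w → Fintype.card (HS.commonNeighbors v w) = 1) v w hne
end

section
/- Let V be a Majorana algebra and let a ∈ V be a Majorana axis with eigenspace decomposition V = V₁ ⊕ V₀ ⊕ V_{1/4} ⊕ V_{1/32} for the adjoint operator ad(a). Then the eigenspaces obey the fusion rules: V₀·V₀ ⊆ V₀; V₀·V_{1/4} ⊆ V_{1/4}; V₀·V_{1/32} ⊆ V_{1/32}; V_{1/4}·V_{1/4} ⊆ V₁ ⊕ V₀; V_{1/4}·V_{1/32} ⊆ V_{1/32}; and V_{1/32}·V_{1/32} ⊆ V₁ ⊕ V₀ ⊕ V_{1/4}. -/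
/-- A Majorana algebra: a real vector space with a symmetric positive-definite bilinear
form and a commutative bilinear product satisfying the associativity law (M1) and the
Norton inequality (M2). -/
structure MajoranaData (V : Type*) [AddCommGroup V] [Module ℝ V] where
  /-- the inner product -/
  inn : V →ₗ[ℝ] V →ₗ[ℝ] ℝ
  /-- the algebra product -/
  mul : V →ₗ[ℝ] V →ₗ[ℝ] V
  inn_symm : ∀ u v : V, inn u v = inn v u
  inn_pos : ∀ v : V, v ≠ 0 → 0 < inn v v
  mul_comm : ∀ u v : V, mul u v = mul v u
  inn_mul_assoc : ∀ u v w : V, inn u (mul v w) = inn (mul u v) w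
  norton : ∀ u v : V, inn (mul u v) (mul u v) ≤ inn (mul u u) (mul v v)

namespace MajoranaData

variable {V : Type*} [AddCommGroup V] [Module ℝ V]

/-- The `μ`-eigenspace of the adjoint operator `ad(a) : v ↦ a · v`. -/
def eig (D : MajoranaData V) (a : V) (μ : ℝ) : Submodule ℝ V where
  carrier := {v | D.mul a v = μ • v}
  add_mem' := by
    intro u v hu hv
    simp only [Set.mem_setOf_eq] at hu hv ⊢
    rw [map_add, hu, hv, smul_add]
  zero_mem' := by simp [Set.mem_setOf_eq]
  smul_mem' := by
    intro c v hv
    simp only [Set.mem_setOf_eq] at hv ⊢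
    rw [map_smul, hv, smul_comm]

/-- A Majorana axis: axioms (M3)–(M7). -/
structure IsAxis (D : MajoranaData V) (a : V) : Prop where
  /-- (M3): `a` is an idempotent of length 1 -/
  inn_self : D.inn a a = 1
  idem : D.mul a a = a
  /-- (M4): `ad(a)` is semisimple with spectrum contained in `{1, 0, 1/4, 1/32}` -/
  decomp : ∀ v : V, ∃ v₁ ∈ D.eig a 1, ∃ v₀ ∈ D.eig a 0, ∃ v₄ ∈ D.eig a (1/4),
    ∃ v₃₂ ∈ D.eig a (1/32), v = v₁ + v₀ + v₄ + v₃₂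
  /-- (M5): the 1-eigenspace is `ℝ a` -/
  eig_one : ∀ v ∈ D.eig a 1, ∃ c : ℝ, v = c • a
  /-- (M6): the Majorana involution `τ(a)` preserves the product -/
  tau : ∃ τ : V →ₗ[ℝ] V,
    (∀ v ∈ D.eig a 1, τ v = v) ∧ (∀ v ∈ D.eig a 0, τ v = v) ∧
    (∀ v ∈ D.eig a (1/4), τ v = v) ∧ (∀ v ∈ D.eig a (1/32), τ v = -v) ∧
    (∀ u v : V, D.mul (τ u) (τ v) = τ (D.mul u v))
  /-- (M7): `σ(a)` preserves the product on `V₊ = V₁ ⊕ V₀ ⊕ V_{1/4}` -/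
  sigma : ∃ σ : V →ₗ[ℝ] V,
    (∀ v ∈ D.eig a 1, σ v = v) ∧ (∀ v ∈ D.eig a 0, σ v = v) ∧
    (∀ v ∈ D.eig a (1/4), σ v = -v) ∧
    (∀ u v : V, u ∈ D.eig a 1 ⊔ D.eig a 0 ⊔ D.eig a (1/4) →
      v ∈ D.eig a 1 ⊔ D.eig a 0 ⊔ D.eig a (1/4) →
      D.mul (σ u) (σ v) = σ (D.mul u v))

end MajoranaData

/-- The fusion rules for the eigenspaces of a Majorana axis. -/
theorem MajoranaData.fusion_rules {V : Type*} [AddCommGroup V] [Module ℝ V]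
    (D : MajoranaData V) (a : V) (ha : D.IsAxis a) :
    (∀ u ∈ D.eig a 0, ∀ v ∈ D.eig a 0, D.mul u v ∈ D.eig a 0) ∧
    (∀ u ∈ D.eig a 0, ∀ v ∈ D.eig a (1/4), D.mul u v ∈ D.eig a (1/4)) ∧
    (∀ u ∈ D.eig a 0, ∀ v ∈ D.eig a (1/32), D.mul u v ∈ D.eig a (1/32)) ∧
    (∀ u ∈ D.eig a (1/4), ∀ v ∈ D.eig a (1/4), D.mul u v ∈ D.eig a 1 ⊔ D.eig a 0) ∧
    (∀ u ∈ D.eig a (1/4), ∀ v ∈ D.eig a (1/32), D.mul u v ∈ D.eig a (1/32)) ∧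
    (∀ u ∈ D.eig a (1/32), ∀ v ∈ D.eig a (1/32),
      D.mul u v ∈ D.eig a 1 ⊔ D.eig a 0 ⊔ D.eig a (1/4)) := by
  have mem_eig : ∀ (μ : ℝ) (v : V), v ∈ D.eig a μ ↔ D.mul a v = μ • v := fun _ _ => Iff.rfl
  obtain ⟨τ, hτ1, hτ0, hτ4, hτ32, hτm⟩ := ha.tau
  obtain ⟨σ, hσ1, hσ0, hσ4, hσm⟩ := ha.sigma
  have half : ∀ x : V, x + x = 0 → x = 0 := by
    intro x hx
    have h2 : (2 : ℝ) • x = 0 := by rw [two_smul]; exact hx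
    calc x = (2⁻¹ : ℝ) • ((2 : ℝ) • x) := by rw [smul_smul]; norm_num
      _ = 0 := by rw [h2, smul_zero]
  -- w fixed by τ lies in V₁ + V₀ + V₄ (with explicit decomposition)
  have tau_plus : ∀ w : V, τ w = w → ∃ w₁ ∈ D.eig a 1, ∃ w₀ ∈ D.eig a 0,
      ∃ w₄ ∈ D.eig a (1/4), w = w₁ + w₀ + w₄ := by
    intro w hw
    obtain ⟨w₁, h1, w₀, h0, w₄, h4, w₃₂, h32, hs⟩ := ha.decomp w
    have hτw : τ w = w₁ + w₀ + w₄ + -w₃₂ := by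
      rw [hs, map_add, map_add, map_add, hτ1 _ h1, hτ0 _ h0, hτ4 _ h4, hτ32 _ h32]
    have hz : w₃₂ = 0 := by
      apply half
      calc w₃₂ + w₃₂ = (w₁ + w₀ + w₄ + w₃₂) - (w₁ + w₀ + w₄ + -w₃₂) := by abel
        _ = w - τ w := by rw [← hs, ← hτw]
        _ = 0 := by rw [hw, sub_self]
    exact ⟨w₁, h1, w₀, h0, w₄, h4, by rw [hs, hz, add_zero]⟩
  -- w negated by τ lies in V₃₂
  have tau_neg : ∀ w : V, τ w = -w → w ∈ D.eig a (1/32) := by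
    intro w hw
    obtain ⟨w₁, h1, w₀, h0, w₄, h4, w₃₂, h32, hs⟩ := ha.decomp w
    have hτw : τ w = w₁ + w₀ + w₄ + -w₃₂ := by
      rw [hs, map_add, map_add, map_add, hτ1 _ h1, hτ0 _ h0, hτ4 _ h4, hτ32 _ h32]
    have hz : w₁ + w₀ + w₄ = 0 := by
      apply half
      calc (w₁ + w₀ + w₄) + (w₁ + w₀ + w₄)
          = (w₁ + w₀ + w₄ + -w₃₂) + (w₁ + w₀ + w₄ + w₃₂) := by abel
        _ = τ w + w := by rw [← hτw, ← hs]
        _ = 0 := by rw [hw]; abel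
    have hww : w = w₃₂ := by rw [hs, hz, zero_add]
    exact hww ▸ h32
  -- σ on a decomposed element of V₊
  have sig_formula : ∀ w₁ ∈ D.eig a 1, ∀ w₀ ∈ D.eig a 0, ∀ w₄ ∈ D.eig a (1/4),
      σ (w₁ + w₀ + w₄) = w₁ + w₀ + -w₄ := by
    intro w₁ h1 w₀ h0 w₄ h4
    rw [map_add, map_add, hσ1 _ h1, hσ0 _ h0, hσ4 _ h4]
  have mem0 : ∀ u ∈ D.eig a 0, u ∈ D.eig a 1 ⊔ D.eig a 0 ⊔ D.eig a (1/4) :=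
    fun u hu => Submodule.mem_sup_left (Submodule.mem_sup_right hu)
  have mem4 : ∀ u ∈ D.eig a (1/4), u ∈ D.eig a 1 ⊔ D.eig a 0 ⊔ D.eig a (1/4) :=
    fun u hu => Submodule.mem_sup_right hu
  refine ⟨?_, ?_, ?_, ?_, ?_, ?_⟩
  · -- V₀ · V₀ ⊆ V₀
    intro u hu v hv
    have hτ : τ (D.mul u v) = D.mul u v := by rw [← hτm, hτ0 _ hu, hτ0 _ hv]
    obtain ⟨w₁, h1, w₀, h0, w₄, h4, hs⟩ := tau_plus _ hτ
    have hσ : σ (D.mul u v) = D.mul u v := by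
      rw [← hσm u v (mem0 u hu) (mem0 v hv), hσ0 _ hu, hσ0 _ hv]
    have hsf : σ (D.mul u v) = w₁ + w₀ + -w₄ := by
      rw [hs]; exact sig_formula _ h1 _ h0 _ h4
    have h4z : w₄ = 0 := by
      apply half
      calc w₄ + w₄ = (w₁ + w₀ + w₄) - (w₁ + w₀ + -w₄) := by abel
        _ = D.mul u v - σ (D.mul u v) := by rw [← hs, ← hsf]
        _ = 0 := by rw [hσ, sub_self]
    obtain ⟨c, hc⟩ := ha.eig_one w₁ h1
    have hmau : D.mul a u = 0 := by rw [(mem_eig 0 u).mp hu, zero_smul]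
    have hmaw₀ : D.mul a w₀ = 0 := by rw [(mem_eig 0 w₀).mp h0, zero_smul]
    have hio : D.inn a (D.mul u v) = 0 := by
      rw [D.inn_mul_assoc a u v, hmau]; simp
    have hiw₀ : D.inn a w₀ = 0 := by
      have h := D.inn_mul_assoc a a w₀
      rw [ha.idem, hmaw₀] at h
      simpa using h.symm
    have hcz : c = 0 := by
      have : D.inn a (D.mul u v) = c := by
        rw [hs, h4z, add_zero, hc, map_add, hiw₀, add_zero, map_smul, ha.inn_self]
        simp
      rw [hio] at this; exact this.symm
    have : D.mul u v = w₀ := by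
      rw [hs, h4z, add_zero, hc, hcz, zero_smul, zero_add]
    exact this ▸ h0
  · -- V₀ · V₄ ⊆ V₄
    intro u hu v hv
    have hτ : τ (D.mul u v) = D.mul u v := by rw [← hτm, hτ0 _ hu, hτ4 _ hv]
    obtain ⟨w₁, h1, w₀, h0, w₄, h4, hs⟩ := tau_plus _ hτ
    have hσ : σ (D.mul u v) = -(D.mul u v) := by
      rw [← hσm u v (mem0 u hu) (mem4 v hv), hσ0 _ hu, hσ4 _ hv, map_neg]
    have hz : w₁ + w₀ = 0 := by
      apply half
      calc (w₁ + w₀) + (w₁ + w₀)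
          = (w₁ + w₀ + -w₄) + (w₁ + w₀ + w₄) := by abel
        _ = σ (w₁ + w₀ + w₄) + D.mul u v := by rw [sig_formula _ h1 _ h0 _ h4, hs]
        _ = 0 := by rw [← hs, hσ, neg_add_cancel]
    have : D.mul u v = w₄ := by rw [hs, hz, zero_add]
    exact this ▸ h4
  · -- V₀ · V₃₂ ⊆ V₃₂
    intro u hu v hv
    apply tau_neg
    rw [← hτm, hτ0 _ hu, hτ32 _ hv, map_neg]
  · -- V₄ · V₄ ⊆ V₁ ⊔ V₀
    intro u hu v hv
    have hτ : τ (D.mul u v) = D.mul u v := by rw [← hτm, hτ4 _ hu, hτ4 _ hv]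
    obtain ⟨w₁, h1, w₀, h0, w₄, h4, hs⟩ := tau_plus _ hτ
    have hσ : σ (D.mul u v) = D.mul u v := by
      rw [← hσm u v (mem4 u hu) (mem4 v hv), hσ4 _ hu, hσ4 _ hv]
      simp
    have hsf : σ (D.mul u v) = w₁ + w₀ + -w₄ := by
      rw [hs]; exact sig_formula _ h1 _ h0 _ h4
    have h4z : w₄ = 0 := by
      apply half
      calc w₄ + w₄ = (w₁ + w₀ + w₄) - (w₁ + w₀ + -w₄) := by abel
        _ = D.mul u v - σ (D.mul u v) := by rw [← hs, ← hsf]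
        _ = 0 := by rw [hσ, sub_self]
    have : D.mul u v = w₁ + w₀ := by rw [hs, h4z, add_zero]
    rw [this]
    exact Submodule.add_mem _ (Submodule.mem_sup_left h1) (Submodule.mem_sup_right h0)
  · -- V₄ · V₃₂ ⊆ V₃₂
    intro u hu v hv
    apply tau_neg
    rw [← hτm, hτ4 _ hu, hτ32 _ hv, map_neg]
  · -- V₃₂ · V₃₂ ⊆ V₁ ⊔ V₀ ⊔ V₄
    intro u hu v hv
    have hτ : τ (D.mul u v) = D.mul u v := by
      rw [← hτm, hτ32 _ hu, hτ32 _ hv]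
      simp
    obtain ⟨w₁, h1, w₀, h0, w₄, h4, hs⟩ := tau_plus _ hτ
    rw [hs]
    exact Submodule.add_mem _
      (Submodule.mem_sup_left
        (Submodule.add_mem _ (Submodule.mem_sup_left h1) (Submodule.mem_sup_right h0)))
      (Submodule.mem_sup_right h4)
end
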